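/- Let Φ: ℝ^p × ℝ^q → ℝ^{p+q} be the map sending coefficient vectors (a,b) of monic polynomials P_a(z) = z^p + Σ a_i z^{p-i} and Q_b(z) = z^q + Σ b_j z^{q-j} to the coefficient vector c of their product R_c = P_a Q_b. Then the Jacobian determinant of Φ at (a,b) equals, up to sign, the resultant of P_a and Q_b. -/

import Mathlib

open Polynomial

/-- The monic polynomial `z^n + a_1 z^{n-1} + ... + a_n` associated to a coefficient
vector `a ∈ ℝ^n`. -/
noncomputable def monicOfCoeffs (n : ℕ) (a : Fin n → ℝ) : Polynomial ℝ :=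
  Polynomial.X ^ n + ∑ i : Fin n, Polynomial.C (a i) * Polynomial.X ^ (n - 1 - (i : ℕ))

/-- The Sylvester matrix of a pair of monic polynomials `P` (degree `p`) and `Q`
(degree `q`): the first `q` rows carry the shifted coefficient sequences of `P`
(in decreasing-degree order), the last `p` rows those of `Q`. -/
noncomputable def sylvesterMat (p q : ℕ) (P Q : Polynomial ℝ) :
    Matrix (Fin (p + q)) (Fin (p + q)) ℝ := fun i j =>
  if (i : ℕ) < q then
    (if (i : ℕ) ≤ (j : ℕ) ∧ (j : ℕ) ≤ (i : ℕ) + p then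
      P.coeff (p - ((j : ℕ) - (i : ℕ))) else 0)
  else
    (if (i : ℕ) - q ≤ (j : ℕ) ∧ (j : ℕ) ≤ ((i : ℕ) - q) + q then
      Q.coeff (q - ((j : ℕ) - ((i : ℕ) - q))) else 0)

/-- The multiplication map on coefficient vectors: `(a, b) ↦ c` where
`P_a · Q_b = R_c`.  Here the domain `ℝ^p × ℝ^q` is identified with `ℝ^{p+q}`. -/
noncomputable def coeffMulMap (p q : ℕ) : (Fin (p + q) → ℝ) → (Fin (p + q) → ℝ) :=
  fun v k =>
    (monicOfCoeffs p (fun i => v (Fin.castAdd q i)) *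
      monicOfCoeffs q (fun j => v (Fin.natAdd p j))).coeff (p + q - 1 - (k : ℕ))

/- ----------------------------------------------------------------
   Auxiliary material
---------------------------------------------------------------- -/

/-- The non-leading part of `monicOfCoeffs`. -/
noncomputable def lpoly (n : ℕ) (a : Fin n → ℝ) : Polynomial ℝ :=
  ∑ i : Fin n, Polynomial.C (a i) * Polynomial.X ^ (n - 1 - (i : ℕ))

lemma monicOfCoeffs_eq (n : ℕ) (a : Fin n → ℝ) :
    monicOfCoeffs n a = X ^ n + lpoly n a := rfl

lemma lpoly_add (n : ℕ) (a b : Fin n → ℝ) :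
    lpoly n (a + b) = lpoly n a + lpoly n b := by
  simp [lpoly, add_mul, Finset.sum_add_distrib]

lemma lpoly_smul (n : ℕ) (c : ℝ) (a : Fin n → ℝ) :
    lpoly n (c • a) = c • lpoly n a := by
  simp [lpoly, Finset.smul_sum, smul_eq_C_mul, mul_assoc]

lemma lpoly_zero (n : ℕ) : lpoly n (0 : Fin n → ℝ) = 0 := by
  simp [lpoly]

lemma lpoly_single (n : ℕ) (i : Fin n) :
    lpoly n (Pi.single i (1 : ℝ)) = X ^ (n - 1 - (i : ℕ)) := by
  rw [lpoly, Finset.sum_eq_single i]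
  · simp
  · intro j _ hj
    rw [Pi.single_eq_of_ne hj]
    simp
  · simp

lemma coeff_monicOfCoeffs_of_gt (n : ℕ) (a : Fin n → ℝ) {e : ℕ} (h : n < e) :
    (monicOfCoeffs n a).coeff e = 0 := by
  rw [monicOfCoeffs_eq, coeff_add, lpoly, finset_sum_coeff, coeff_X_pow,
    if_neg (by omega), Finset.sum_eq_zero, add_zero]
  intro i _
  have hi := i.isLt
  rw [coeff_C_mul, coeff_X_pow, if_neg (by omega), mul_zero]

/-- The key coefficient computation. -/
lemma key_coeff (N : ℕ) (R : Polynomial ℝ) (hR : ∀ e, N < e → R.coeff e = 0)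
    (t i k : ℕ) (hi : i < t) (hk : k < t + N) :
    (R * X ^ (t - 1 - i)).coeff (t + N - 1 - k) =
      if i ≤ k ∧ k ≤ i + N then R.coeff (N - (k - i)) else 0 := by
  rw [coeff_mul_X_pow']
  by_cases h : i ≤ k ∧ k ≤ i + N
  · rw [if_pos h, if_pos (by omega)]
    congr 1
    omega
  · rw [if_neg h]
    rcases Nat.lt_or_ge k i with hk' | hk'
    · rw [if_pos (by omega)]
      exact hR _ (by omega)
    · rw [if_neg (by omega)]

section maps

variable (p q : ℕ)

/-- Projection onto the first `p` coordinates. -/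
noncomputable def projA : (Fin (p + q) → ℝ) →L[ℝ] (Fin p → ℝ) :=
  ContinuousLinearMap.pi fun i => ContinuousLinearMap.proj (Fin.castAdd q i)

/-- Projection onto the last `q` coordinates. -/
noncomputable def projB : (Fin (p + q) → ℝ) →L[ℝ] (Fin q → ℝ) :=
  ContinuousLinearMap.pi fun j => ContinuousLinearMap.proj (Fin.natAdd p j)

@[simp] lemma projA_apply (v : Fin (p + q) → ℝ) :
    projA p q v = fun i => v (Fin.castAdd q i) := rfl

@[simp] lemma projB_apply (v : Fin (p + q) → ℝ) :
    projB p q v = fun j => v (Fin.natAdd p j) := rfl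

/-- The bilinear part of the coefficient multiplication map, as a bilinear map. -/
noncomputable def bilL : (Fin p → ℝ) →ₗ[ℝ] (Fin q → ℝ) →ₗ[ℝ] (Fin (p + q) → ℝ) :=
  LinearMap.mk₂ ℝ
    (fun a b k => (lpoly p a * lpoly q b).coeff (p + q - 1 - (k : ℕ)))
    (by intro a a' b; funext k; simp [lpoly_add, add_mul])
    (by intro c a b; funext k; simp [lpoly_smul, smul_mul_assoc])
    (by intro a b b'; funext k; simp [lpoly_add, mul_add])
    (by intro c a b; funext k; simp [lpoly_smul, mul_smul_comm])

/-- The bilinear part, upgraded to a continuous bilinear map. -/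
noncomputable def bilCLM : (Fin p → ℝ) →L[ℝ] (Fin q → ℝ) →L[ℝ] (Fin (p + q) → ℝ) :=
  LinearMap.toContinuousLinearMap
    ((LinearMap.toContinuousLinearMap :
        ((Fin q → ℝ) →ₗ[ℝ] (Fin (p + q) → ℝ)) ≃ₗ[ℝ] _).toLinearMap.comp (bilL p q))

@[simp] lemma bilCLM_apply (a : Fin p → ℝ) (b : Fin q → ℝ) (k : Fin (p + q)) :
    bilCLM p q a b k = (lpoly p a * lpoly q b).coeff (p + q - 1 - (k : ℕ)) := by
  simp [bilCLM, bilL]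

/-- The linear part of the coefficient multiplication map. -/
noncomputable def linL : (Fin (p + q) → ℝ) →ₗ[ℝ] (Fin (p + q) → ℝ) where
  toFun v k := (X ^ p * lpoly q (fun j => v (Fin.natAdd p j))
      + X ^ q * lpoly p (fun i => v (Fin.castAdd q i))).coeff (p + q - 1 - (k : ℕ))
  map_add' := by
    intro v w
    funext k
    beta_reduce
    have ha : (fun i => (v + w) (Fin.castAdd q i))
        = (fun i => v (Fin.castAdd q i)) + (fun i => w (Fin.castAdd q i)) := rfl
    have hb : (fun j => (v + w) (Fin.natAdd p j))
        = (fun j => v (Fin.natAdd p j)) + (fun j => w (Fin.natAdd p j)) := rfl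
    rw [ha, hb, lpoly_add, lpoly_add]
    simp [mul_add]
    ring
  map_smul' := by
    intro c v
    funext k
    show (X ^ p * lpoly q (fun j => (c • v) (Fin.natAdd p j))
        + X ^ q * lpoly p (fun i => (c • v) (Fin.castAdd q i))).coeff (p + q - 1 - (k : ℕ))
      = c • ((X ^ p * lpoly q (fun j => v (Fin.natAdd p j))
        + X ^ q * lpoly p (fun i => v (Fin.castAdd q i))).coeff (p + q - 1 - (k : ℕ)))
    have ha : (fun i => (c • v) (Fin.castAdd q i))
        = c • (fun i => v (Fin.castAdd q i)) := rfl
    have hb : (fun j => (c • v) (Fin.natAdd p j))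
        = c • (fun j => v (Fin.natAdd p j)) := rfl
    rw [ha, hb, lpoly_smul, lpoly_smul]
    simp [mul_smul_comm]
    ring

noncomputable def linCLM : (Fin (p + q) → ℝ) →L[ℝ] (Fin (p + q) → ℝ) :=
  LinearMap.toContinuousLinearMap (linL p q)

@[simp] lemma linCLM_apply (v : Fin (p + q) → ℝ) (k : Fin (p + q)) :
    linCLM p q v k = (X ^ p * lpoly q (fun j => v (Fin.natAdd p j))
      + X ^ q * lpoly p (fun i => v (Fin.castAdd q i))).coeff (p + q - 1 - (k : ℕ)) := by
  simp [linCLM, linL]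

/-- The total derivative of `coeffMulMap` at `v`. -/
noncomputable def Dfull (v : Fin (p + q) → ℝ) :
    (Fin (p + q) → ℝ) →L[ℝ] (Fin (p + q) → ℝ) :=
  linCLM p q +
    ((bilCLM p q (projA p q v)).comp (projB p q) +
      ((bilCLM p q).comp (projA p q)).flip (projB p q v))

lemma Dfull_apply (v h : Fin (p + q) → ℝ) (k : Fin (p + q)) :
    Dfull p q v h k =
      (lpoly p (fun i => h (Fin.castAdd q i)) *
          (X ^ q + lpoly q (fun j => v (Fin.natAdd p j))) +
        (X ^ p + lpoly p (fun i => v (Fin.castAdd q i))) *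
          lpoly q (fun j => h (Fin.natAdd p j))).coeff (p + q - 1 - (k : ℕ)) := by
  simp only [Dfull, ContinuousLinearMap.add_apply, ContinuousLinearMap.coe_comp',
    Function.comp_apply, ContinuousLinearMap.flip_apply, Pi.add_apply,
    linCLM_apply, bilCLM_apply, projA_apply, projB_apply]
  rw [mul_add, add_mul, mul_comm (X ^ q)]
  simp only [coeff_add]
  ring

lemma coeffMulMap_decomp (v : Fin (p + q) → ℝ) :
    coeffMulMap p q v = linCLM p q v + bilCLM p q (projA p q v) (projB p q v) := by
  funext k
  have hk := k.isLt
  simp only [coeffMulMap, monicOfCoeffs_eq, Pi.add_apply, linCLM_apply, bilCLM_apply,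
    projA_apply, projB_apply]
  rw [add_mul, mul_add, mul_add, ← pow_add]
  simp only [coeff_add, coeff_X_pow, if_neg (show ¬ p + q - 1 - (k : ℕ) = p + q by omega)]
  ring

lemma hasFDerivAt_coeffMulMap (v : Fin (p + q) → ℝ) :
    HasFDerivAt (coeffMulMap p q) (Dfull p q v) v := by
  have hfun : coeffMulMap p q
      = fun w => linCLM p q w + bilCLM p q (projA p q w) (projB p q w) :=
    funext fun w => coeffMulMap_decomp p q w
  rw [hfun, Dfull]
  have hc : HasFDerivAt (fun w => bilCLM p q (projA p q w))
      ((bilCLM p q).comp (projA p q)) v :=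
    ((bilCLM p q).comp (projA p q)).hasFDerivAt
  have hu : HasFDerivAt (fun w => projB p q w) (projB p q) v :=
    (projB p q).hasFDerivAt
  exact (linCLM p q).hasFDerivAt.add (hc.clm_apply hu)

end maps

/-- The index flip permutation. -/
def sylPerm (p q : ℕ) : Equiv.Perm (Fin (p + q)) :=
  (finAddFlip : Fin (p + q) ≃ Fin (q + p)).trans (finCongr (Nat.add_comm q p))

lemma sylPerm_castAdd (p q : ℕ) (i : Fin p) :
    ((sylPerm p q (Fin.castAdd q i) : Fin (p + q)) : ℕ) = q + (i : ℕ) := by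
  simp [sylPerm, finAddFlip_apply_castAdd]
  omega

lemma sylPerm_natAdd (p q : ℕ) (j : Fin q) :
    ((sylPerm p q (Fin.natAdd p j) : Fin (p + q)) : ℕ) = (j : ℕ) := by
  simp [sylPerm, finAddFlip_apply_natAdd]

/-- Entrywise identification of the Jacobian matrix with the (permuted, transposed)
Sylvester matrix. -/
lemma Dfull_entry (p q : ℕ) (v : Fin (p + q) → ℝ) (k l : Fin (p + q)) :
    Dfull p q v (Pi.single l (1 : ℝ)) k =
      sylvesterMat p q (monicOfCoeffs p (fun i => v (Fin.castAdd q i)))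
        (monicOfCoeffs q (fun j => v (Fin.natAdd p j))) (sylPerm p q l) k := by
  set P := monicOfCoeffs p (fun i => v (Fin.castAdd q i)) with hP
  set Q := monicOfCoeffs q (fun j => v (Fin.natAdd p j)) with hQ
  have hk := k.isLt
  induction l using Fin.addCases with
  | left i =>
    have hi := i.isLt
    have ha : (fun i' : Fin p => (Pi.single (Fin.castAdd q i) (1 : ℝ) : Fin (p + q) → ℝ) (Fin.castAdd q i'))
        = Pi.single i (1 : ℝ) := by
      funext i'
      rcases eq_or_ne i' i with rfl | hne
      · simp
      · rw [Pi.single_eq_of_ne hne, Pi.single_eq_of_ne]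
        exact fun hc => hne (Fin.castAdd_injective p q hc)
    have hb : (fun j : Fin q => (Pi.single (Fin.castAdd q i) (1 : ℝ) : Fin (p + q) → ℝ) (Fin.natAdd p j))
        = 0 := by
      funext j
      rw [Pi.single_eq_of_ne, Pi.zero_apply]
      intro hc
      have := congrArg (fun x : Fin (p + q) => (x : ℕ)) hc
      simp only [Fin.coe_natAdd, Fin.coe_castAdd] at this
      omega
    have hrhs : sylvesterMat p q P Q (sylPerm p q (Fin.castAdd q i)) k
        = if (i : ℕ) ≤ (k : ℕ) ∧ (k : ℕ) ≤ (i : ℕ) + q then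
            Q.coeff (q - ((k : ℕ) - (i : ℕ))) else 0 := by
      have h1 : ((sylPerm p q (Fin.castAdd q i) : Fin (p + q)) : ℕ) = q + (i : ℕ) :=
        sylPerm_castAdd p q i
      unfold sylvesterMat
      simp only [h1]
      rw [if_neg (show ¬ q + (i : ℕ) < q by omega),
        show q + (i : ℕ) - q = (i : ℕ) by omega]
    rw [hrhs, Dfull_apply, ha, hb, lpoly_single, lpoly_zero, mul_zero, add_zero,
      ← monicOfCoeffs_eq, ← hQ, mul_comm]
    exact key_coeff q Q (fun e he => coeff_monicOfCoeffs_of_gt q _ he) p i k hi hk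
  | right j =>
    have hj := j.isLt
    have ha : (fun i' : Fin p => (Pi.single (Fin.natAdd p j) (1 : ℝ) : Fin (p + q) → ℝ) (Fin.castAdd q i'))
        = 0 := by
      funext i'
      rw [Pi.single_eq_of_ne, Pi.zero_apply]
      intro hc
      have := congrArg (fun x : Fin (p + q) => (x : ℕ)) hc
      simp only [Fin.coe_natAdd, Fin.coe_castAdd] at this
      omega
    have hb : (fun j' : Fin q => (Pi.single (Fin.natAdd p j) (1 : ℝ) : Fin (p + q) → ℝ) (Fin.natAdd p j'))
        = Pi.single j (1 : ℝ) := by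
      funext j'
      rcases eq_or_ne j' j with rfl | hne
      · simp
      · rw [Pi.single_eq_of_ne hne, Pi.single_eq_of_ne]
        intro hc
        apply hne
        have := congrArg (fun x : Fin (p + q) => (x : ℕ)) hc
        simp only [Fin.coe_natAdd] at this
        exact Fin.ext (by omega)
    have hrhs : sylvesterMat p q P Q (sylPerm p q (Fin.natAdd p j)) k
        = if (j : ℕ) ≤ (k : ℕ) ∧ (k : ℕ) ≤ (j : ℕ) + p then
            P.coeff (p - ((k : ℕ) - (j : ℕ))) else 0 := by
      have h1 : ((sylPerm p q (Fin.natAdd p j) : Fin (p + q)) : ℕ) = (j : ℕ) :=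
        sylPerm_natAdd p q j
      unfold sylvesterMat
      simp only [h1]
      rw [if_pos hj]
    rw [hrhs, Dfull_apply, ha, hb, lpoly_single, lpoly_zero, zero_mul, zero_add,
      ← monicOfCoeffs_eq, ← hP]
    have heq : p + q - 1 - (k : ℕ) = q + p - 1 - (k : ℕ) := by omega
    rw [heq]
    exact key_coeff p P (fun e he => coeff_monicOfCoeffs_of_gt p _ he) q (j : ℕ) k hj
      (by omega)

theorem jacobian_coeffMulMap_eq_resultant (p q : ℕ) (v : Fin (p + q) → ℝ) :
    LinearMap.det (fderiv ℝ (coeffMulMap p q) v).toLinearMap =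
        (sylvesterMat p q (monicOfCoeffs p (fun i => v (Fin.castAdd q i)))
          (monicOfCoeffs q (fun j => v (Fin.natAdd p j)))).det ∨
    LinearMap.det (fderiv ℝ (coeffMulMap p q) v).toLinearMap =
        -(sylvesterMat p q (monicOfCoeffs p (fun i => v (Fin.castAdd q i)))
          (monicOfCoeffs q (fun j => v (Fin.natAdd p j)))).det := by
  set S := sylvesterMat p q (monicOfCoeffs p (fun i => v (Fin.castAdd q i)))
    (monicOfCoeffs q (fun j => v (Fin.natAdd p j))) with hS
  rw [(hasFDerivAt_coeffMulMap p q v).fderiv]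
  have hmat : ∀ k l, LinearMap.toMatrix' (Dfull p q v).toLinearMap k l
      = S.submatrix (⇑(sylPerm p q)) id l k := by
    intro k l
    rw [LinearMap.toMatrix'_apply]
    have hsingle : (fun j' => if j' = l then (1 : ℝ) else 0) = Pi.single l 1 := by
      funext j'
      rw [Pi.single_apply]
    exact Dfull_entry p q v k l
  have hmat' : LinearMap.toMatrix' (Dfull p q v).toLinearMap
      = (S.submatrix (⇑(sylPerm p q)) id).transpose :=
    Matrix.ext fun k l => hmat k l
  have hdet : LinearMap.det (Dfull p q v).toLinearMap
      = ((Equiv.Perm.sign (sylPerm p q) : ℤ) : ℝ) * S.det := by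
    rw [← LinearMap.det_toMatrix', hmat', Matrix.det_transpose, Matrix.det_permute]
  rcases Int.units_eq_one_or (Equiv.Perm.sign (sylPerm p q)) with h | h
  · left
    rw [hdet, h]
    simp
  · right
    rw [hdet, h]
    simp
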